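/- Let V be a vector space over an algebraically closed field F, D : V → V linear, and P = P[D] polynomial in D of degree ≥ 1. Then (μ, u) is an eigenvalue–eigenvector pair for P (i.e. Pu = μu, u ≠ 0) if and only if u = u₁ + … + u_k for some k ≥ 1, with each uᵢ ≠ 0 satisfying (D − λᵢ)^{pᵢ}uᵢ = 0, where λ₁,…,λ_k are distinct roots of the polynomial P[x] − μ with respective multiplicities pᵢ. -/

import Mathlib

open LinearMap Polynomial

section Aux

variable {F : Type*} [Field F] {V : Type*} [AddCommGroup V] [Module F V]

lemma aux_coprime (a : F) (m : F → ℕ) (t : Finset F) (ha : a ∉ t) :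
    IsCoprime ((X - C a : F[X]) ^ (m a)) (∏ r ∈ t, (X - C r) ^ (m r)) := by
  refine IsCoprime.pow_left (IsCoprime.prod_right fun b hb => IsCoprime.pow_right ?_)
  exact isCoprime_X_sub_C_of_isUnit_sub
    (sub_ne_zero_of_ne (by rintro rfl; exact ha hb)).isUnit

lemma aux_decomp (D : Module.End F V) (m : F → ℕ) (t : Finset F) :
    ∀ u : V, (aeval D (∏ r ∈ t, (X - C r) ^ (m r))) u = 0 →
      ∃ w : F → V, (∀ r ∈ t, (aeval D ((X - C r) ^ (m r))) (w r) = 0) ∧ u = ∑ r ∈ t, w r := by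
  classical
  induction t using Finset.induction_on with
  | empty =>
      intro u hu
      simp only [Finset.prod_empty, map_one, Module.End.one_apply] at hu
      exact ⟨0, by simp, by simp [hu]⟩
  | @insert a t ha ih =>
      intro u hu
      rw [Finset.prod_insert ha] at hu
      have hmem : u ∈ LinearMap.ker (aeval D ((X - C a) ^ (m a)))
          ⊔ LinearMap.ker (aeval D (∏ r ∈ t, (X - C r) ^ (m r))) := by
        rw [Polynomial.sup_ker_aeval_eq_ker_aeval_mul_of_coprime D (aux_coprime a m t ha)]
        exact hu
      obtain ⟨x, hx, y, hy, hxy⟩ := Submodule.mem_sup.1 hmem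
      obtain ⟨w, hw, hsum⟩ := ih y hy
      refine ⟨Function.update w a x, ?_, ?_⟩
      · intro r hr
        rcases Finset.mem_insert.1 hr with rfl | hr
        · simpa using hx
        · rw [Function.update_of_ne (ne_of_mem_of_not_mem hr ha)]
          exact hw r hr
      · rw [Finset.sum_insert ha, Function.update_self]
        rw [Finset.sum_congr rfl fun r hr =>
          Function.update_of_ne (ne_of_mem_of_not_mem hr ha) x w]
        rw [← hsum, hxy]

end Aux

/-- eigenvectors of `P[D]` are sums of generalised
eigenvectors of `D` for the roots of `P[x] − μ`. -/
theorem stmt13 {F : Type*} [Field F] [IsAlgClosed F] [DecidableEq F]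
    {V : Type*} [AddCommGroup V] [Module F V]
    (D : Module.End F V) (P : F[X]) (hP : 1 ≤ P.degree) (mu : F) (u : V) :
    ((aeval D P) u = mu • u ∧ u ≠ 0) ↔
      ∃ s : Finset F, s.Nonempty ∧ s ⊆ (P - C mu).roots.toFinset ∧
        ∃ w : F → V,
          (∀ r ∈ s, w r ≠ 0 ∧
            ((D - r • (1 : Module.End F V)) ^ (rootMultiplicity r (P - C mu))) (w r) = 0) ∧
          u = ∑ r ∈ s, w r := by
  classical
  set Q : F[X] := P - C mu with hQ
  have hQdeg : 1 ≤ Q.degree := by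
    rw [hQ]
    rwa [Polynomial.degree_sub_eq_left_of_degree_lt
      (lt_of_le_of_lt (degree_C_le) (lt_of_lt_of_le (by norm_num) hP))]
  have hQ0 : Q ≠ 0 := fun h => by simp [h] at hQdeg
  -- aeval of (X - C r)^k equals (D - r • 1)^k
  have key : ∀ (r : F) (k : ℕ), aeval D ((X - C r) ^ k) = (D - r • (1 : Module.End F V)) ^ k := by
    intro r k
    rw [map_pow, map_sub, aeval_X, aeval_C, Algebra.algebraMap_eq_smul_one]
  -- aeval D P u = mu • u ↔ aeval D Q u = 0
  have hiff : (aeval D P) u = mu • u ↔ (aeval D Q) u = 0 := by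
    rw [hQ, map_sub, LinearMap.sub_apply, aeval_C, Algebra.algebraMap_eq_smul_one,
      LinearMap.smul_apply, Module.End.one_apply, sub_eq_zero]
  -- factorisation of Q
  have hsplit : Q = C Q.leadingCoeff *
      ∏ r ∈ Q.roots.toFinset, (X - C r) ^ (rootMultiplicity r Q) := by
    conv_lhs => rw [(IsAlgClosed.splits Q).eq_prod_roots]
    congr 1
    rw [Finset.prod_multiset_map_count]
    exact Finset.prod_congr rfl fun r _ => by rw [Polynomial.count_roots]
  constructor
  · rintro ⟨hPu, hu0⟩
    have hQu : (aeval D Q) u = 0 := hiff.1 hPu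
    have hQu' : (aeval D (∏ r ∈ Q.roots.toFinset, (X - C r) ^ (rootMultiplicity r Q))) u = 0 := by
      have := hQu
      rw [hsplit, map_mul, Module.End.mul_apply] at this
      rw [aeval_C, Algebra.algebraMap_eq_smul_one] at this
      have hlc : Q.leadingCoeff ≠ 0 := leadingCoeff_ne_zero.2 hQ0
      simpa [smul_eq_zero, hlc] using this
    obtain ⟨w, hw, hsum⟩ := aux_decomp D (fun r => rootMultiplicity r Q) Q.roots.toFinset u hQu'
    refine ⟨(Q.roots.toFinset).filter (fun r => w r ≠ 0), ?_, Finset.filter_subset _ _, w, ?_, ?_⟩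
    · rw [Finset.filter_nonempty_iff]
      by_contra h
      push_neg at h
      exact hu0 (hsum.trans (Finset.sum_eq_zero fun r hr => h r hr))
    · intro r hr
      rcases Finset.mem_filter.1 hr with ⟨hr1, hr2⟩
      refine ⟨hr2, ?_⟩
      rw [← key]
      exact hw r hr1
    · rw [hsum]
      exact (Finset.sum_filter_ne_zero _).symm
  · rintro ⟨s, hsne, hsub, w, hw, rfl⟩
    have hker : ∀ r ∈ s, (aeval D ((X - C r) ^ (rootMultiplicity r Q))) (w r) = 0 := by
      intro r hr
      rw [key]
      exact (hw r hr).2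
    constructor
    · rw [hiff, map_sum]
      refine Finset.sum_eq_zero fun r hr => ?_
      obtain ⟨c, hc⟩ := Polynomial.pow_rootMultiplicity_dvd Q r
      rw [hc, mul_comm, map_mul, Module.End.mul_apply, hker r hr, map_zero]
    · intro h0
      obtain ⟨a, ha⟩ := hsne
      have hcop := aux_coprime a (fun r => rootMultiplicity r Q) (s.erase a)
        (Finset.notMem_erase a s)
      have hdis := Polynomial.disjoint_ker_aeval_of_isCoprime D hcop
      have hwa : w a ∈ LinearMap.ker (aeval D ((X - C a) ^ (rootMultiplicity a Q))) :=
        hker a ha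
      have hwa2 : w a ∈ LinearMap.ker
          (aeval D (∏ r ∈ s.erase a, (X - C r) ^ (rootMultiplicity r Q))) := by
        rw [LinearMap.mem_ker]
        have heq : w a = ∑ r ∈ s, w r - ∑ r ∈ s.erase a, w r := by
          rw [← Finset.add_sum_erase s w ha]; abel
        rw [heq, h0, zero_sub, map_neg, map_sum, neg_eq_zero]
        refine Finset.sum_eq_zero fun r hr => ?_
        have hr' : r ∈ s := Finset.mem_of_mem_erase hr
        have hdvd : ((X - C r) ^ (rootMultiplicity r Q) : F[X]) ∣
            ∏ b ∈ s.erase a, (X - C b) ^ (rootMultiplicity b Q) :=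
          Finset.dvd_prod_of_mem _ hr
        obtain ⟨c, hc⟩ := hdvd
        rw [hc, mul_comm, map_mul, Module.End.mul_apply, hker r hr', map_zero]
      have : w a = 0 := by
        have := hdis.le_bot (Submodule.mem_inf.2 ⟨hwa, hwa2⟩)
        simpa using this
      exact (hw a ha).1 this
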